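/- Let n ≥ 2, G > 0, T ≥ 1, and suppose η = √(log n / T) satisfies η ≤ 1/2 (e.g., T ≥ 4 log n). Let f_1, …, f_T : ℝ^n → ℝ be convex differentiable functions with ‖∇f_t(x)‖_∞ ≤ G for all x ∈ S_n and all t. Define the Multiplicative Weights iterates: w^1_i = 1, x_t = w^t / Σ_i w^t_i, and w^{t+1}_i = w^t_i · (1 − η ∇f_t(x_t)(i)/G). Then the regret satisfies Σ_{t=1}^T f_t(x_t) − min_{x ∈ S_n} Σ_{t=1}^T f_t(x) ≤ ηTG + (G log n)/η = 2G √(T log n). -/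

import Mathlib

open Finset

private lemma mw_key_exp {u : ℝ} (h1 : -(1/2) ≤ u) (h2 : u ≤ 1/2) :
    Real.exp (-u - u^2) ≤ 1 - u := by
  rcases le_or_gt u 0 with hu | hu
  · have h3 : 1 - (-u - u^2) ≤ Real.exp (-(-u - u^2)) := Real.one_sub_le_exp_neg _
    have h4 : 0 < 1 + u + u^2 := by nlinarith
    have h5 : Real.exp (-u - u^2) ≤ 1 / (1 + u + u^2) := by
      rw [le_div_iff₀ h4]
      have hm : Real.exp (-u - u^2) * (1 + u + u^2)
          ≤ Real.exp (-u - u^2) * Real.exp (-(-u-u^2)) := by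
        apply mul_le_mul_of_nonneg_left _ (Real.exp_pos _).le
        calc 1 + u + u^2 = 1 - (-u - u^2) := by ring
        _ ≤ _ := h3
      calc Real.exp (-u - u^2) * (1 + u + u^2) ≤ _ := hm
      _ = 1 := by rw [← Real.exp_add]; ring_nf; exact Real.exp_zero
    refine h5.trans ?_
    rw [div_le_iff₀ h4]
    nlinarith
  · have hs : (0:ℝ) ≤ u + u^2 := by nlinarith
    have h3 := Real.quadratic_le_exp_of_nonneg hs
    have h4 : 1 ≤ (1 - u) * Real.exp (u + u^2) := by
      calc (1:ℝ) ≤ (1 - u) * (1 + (u+u^2) + (u+u^2)^2/2) := by nlinarith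
      _ ≤ _ := by apply mul_le_mul_of_nonneg_left h3; linarith
    have hE : Real.exp (-u - u^2) = (Real.exp (u + u^2))⁻¹ := by
      rw [← Real.exp_neg]; ring_nf
    rw [hE, inv_le_iff_one_le_mul₀ (Real.exp_pos _)]
    linarith [mul_comm (1-u) (Real.exp (u+u^2))]

private lemma mw_grad_ineq {n : ℕ} (f : EuclideanSpace ℝ (Fin n) → ℝ)
    (hf : ConvexOn ℝ Set.univ f) (x y gx : EuclideanSpace ℝ (Fin n))
    (hg : HasGradientAt f gx x) :
    f x + ∑ i, gx i * (y i - x i) ≤ f y := by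
  by_cases hxy : y = x
  · subst hxy; simp
  set v : EuclideanSpace ℝ (Fin n) := y - x with hv
  set φ : ℝ → ℝ := fun s => f (x + s • v) with hφ
  have hconv : ConvexOn ℝ Set.univ φ := by
    have := hf.comp_affineMap (AffineMap.lineMap x y : ℝ →ᵃ[ℝ] EuclideanSpace ℝ (Fin n))
    simp only [Set.preimage_univ] at this
    have heq : φ = f ∘ (AffineMap.lineMap x y : ℝ →ᵃ[ℝ] EuclideanSpace ℝ (Fin n)) := by
      funext s
      simp [hφ, AffineMap.lineMap_apply, hv]
      congr 1
      module
    rw [heq]; exact this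
  have hD : HasDerivAt φ (inner ℝ gx v : ℝ) 0 := by
    have h1 : HasDerivAt (fun s : ℝ => x + s • v) v 0 := by
      simpa using ((hasDerivAt_id (0:ℝ)).smul_const v).const_add x
    have h2 : HasFDerivAt f (InnerProductSpace.toDual ℝ _ gx :
        EuclideanSpace ℝ (Fin n) →L[ℝ] ℝ) (x + (0:ℝ) • v) := by
      simpa using hg.hasFDerivAt
    have := h2.comp_hasDerivAt 0 h1
    simp at this
    exact this
  have hslope := hconv.le_slope_of_hasDerivAt (Set.mem_univ (0:ℝ)) (Set.mem_univ (1:ℝ))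
    one_pos hD
  rw [slope_def_field] at hslope
  have h0 : φ 0 = f x := by simp [hφ]
  have h1 : φ 1 = f y := by simp [hφ, hv]
  rw [h0, h1] at hslope
  simp at hslope
  have hvx : ∀ i, v i = y i - x i := fun i => rfl
  have hinner : (inner ℝ gx v : ℝ) = ∑ i, gx i * v i := by
    rw [PiLp.inner_apply]; simp [RCLike.inner_apply, mul_comm]
  simp only [hinner, hvx] at *
  linarith

set_option maxHeartbeats 1000000 in
/-- Multiplicative Weights regret theorem: with `η = √(log n / T) ≤ 1/2`, convex
differentiable cost functions `fₜ` whose gradients are bounded by `G` in the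
`ℓ∞` norm on the simplex, the MW iterates `xₜ` satisfy
`∑ₜ fₜ(xₜ) − min_{x ∈ Sₙ} ∑ₜ fₜ(x) ≤ ηTG + (G log n)/η = 2G√(T log n)`. -/
theorem multiplicativeWeights_regret {n : ℕ} (hn : 2 ≤ n) (T : ℕ) (hT : 1 ≤ T)
    (G η : ℝ) (hG : 0 < G)
    (hη : η = Real.sqrt (Real.log n / T)) (hη2 : η ≤ 1 / 2)
    (f : ℕ → EuclideanSpace ℝ (Fin n) → ℝ)
    (hfconv : ∀ t, ConvexOn ℝ Set.univ (f t))
    (g : ℕ → EuclideanSpace ℝ (Fin n) → EuclideanSpace ℝ (Fin n))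
    (hgrad : ∀ t x, HasGradientAt (f t) (g t x) x)
    (hgb : ∀ t, t < T → ∀ x : EuclideanSpace ℝ (Fin n),
      (∀ i, 0 ≤ x i) → (∑ i, x i) = 1 → ∀ i, |g t x i| ≤ G)
    (w : ℕ → Fin n → ℝ) (hw0 : ∀ i, w 0 i = 1)
    (x : ℕ → EuclideanSpace ℝ (Fin n)) (hx : ∀ t i, x t i = w t i / ∑ k, w t k)
    (hw : ∀ t, t < T → ∀ i, w (t + 1) i = w t i * (1 - η * g t (x t) i / G)) :
    (∀ xstar : EuclideanSpace ℝ (Fin n), (∀ i, 0 ≤ xstar i) → (∑ i, xstar i) = 1 →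
      ∑ t ∈ Finset.range T, f t (x t) ≤
        (∑ t ∈ Finset.range T, f t xstar) + (η * T * G + G * Real.log n / η)) ∧
    η * T * G + G * Real.log n / η = 2 * G * Real.sqrt (T * Real.log n) := by
  have hηnn : 0 ≤ η := by rw [hη]; exact Real.sqrt_nonneg _
  have hn1 : (1:ℝ) < n := by exact_mod_cast lt_of_lt_of_le one_lt_two hn
  have hlogn : 0 < Real.log n := Real.log_pos hn1
  have hTpos : (0:ℝ) < T := by exact_mod_cast hT
  have hηpos : 0 < η := by
    rw [hη]; exact Real.sqrt_pos.mpr (div_pos hlogn hTpos)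
  have hη2eq : η^2 = Real.log n / T := by
    rw [hη]; exact Real.sq_sqrt (le_of_lt (div_pos hlogn hTpos))
  have hlogeq : Real.log n = η^2 * T := by
    field_simp at hη2eq; linarith
  have hident : η * T * G + G * Real.log n / η = 2 * G * Real.sqrt (T * Real.log n) := by
    have h1 : Real.sqrt (T * Real.log n) = η * T := by
      rw [hlogeq]
      have : (T:ℝ) * (η^2 * T) = (η * T)^2 := by ring
      rw [this, Real.sqrt_sq (by positivity)]
    rw [h1, hlogeq]
    field_simp
    ring
  refine ⟨?_, hident⟩
  intro xstar hxsnn hxssum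
  have hnpos : 0 < n := by omega
  have hne : (Finset.univ : Finset (Fin n)).Nonempty := ⟨⟨0, hnpos⟩, Finset.mem_univ _⟩
  -- positivity of weights
  have wpos : ∀ t, t ≤ T → ∀ i, 0 < w t i := by
    intro t
    induction t with
    | zero => intro _ i; rw [hw0 i]; norm_num
    | succ t ih =>
      intro ht i
      have ht' : t < T := by omega
      have hwt := ih (by omega)
      have hS : 0 < ∑ k, w t k := Finset.sum_pos (fun k _ => hwt k) hne
      have hxnn : ∀ j, 0 ≤ x t j := fun j => by
        rw [hx]; exact div_nonneg (hwt j).le hS.le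
      have hxsum : ∑ j, x t j = 1 := by
        simp only [hx]; rw [← Finset.sum_div, div_self hS.ne']
      have hb := hgb t ht' (x t) hxnn hxsum
      rw [hw t ht' i, mul_div_assoc]
      apply mul_pos (hwt i)
      have hq1 : g t (x t) i / G ≤ 1 := (div_le_one hG).mpr ((abs_le.mp (hb i)).2)
      nlinarith [mul_le_mul_of_nonneg_left hq1 hηnn]
  have hSpos : ∀ t, t ≤ T → 0 < ∑ k, w t k :=
    fun t ht => Finset.sum_pos (fun k _ => wpos t ht k) hne
  have hxnn : ∀ t, t ≤ T → ∀ j, 0 ≤ x t j := fun t ht j => by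
    rw [hx]; exact div_nonneg (wpos t ht j).le (hSpos t ht).le
  have hxsum : ∀ t, t ≤ T → ∑ j, x t j = 1 := fun t ht => by
    simp only [hx]; rw [← Finset.sum_div, div_self (hSpos t ht).ne']
  have hLb : ∀ t, t < T → ∀ i, |g t (x t) i / G| ≤ 1 := by
    intro t ht i
    rw [abs_div, abs_of_pos hG, div_le_one hG]
    exact hgb t ht (x t) (hxnn t ht.le) (hxsum t ht.le) i
  have hw' : ∀ t, t < T → ∀ i, w (t+1) i = w t i * (1 - η * (g t (x t) i / G)) := by
    intro t ht i; rw [hw t ht i, mul_div_assoc]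
  -- upper bound on potential
  have hUB : ∀ t, t ≤ T → ∑ i, w t i ≤
      n * Real.exp (-η * ∑ s ∈ Finset.range t, ∑ j, x s j * (g s (x s) j / G)) := by
    intro t
    induction t with
    | zero => intro _; simp [hw0, Finset.card_univ]
    | succ t ih =>
      intro ht
      have ht' : t < T := by omega
      have hS := hSpos t ht'.le
      have hrec : ∑ i, w (t+1) i
          = (∑ i, w t i) * (1 - η * ∑ j, x t j * (g t (x t) j / G)) := by
        calc ∑ i, w (t+1) i = ∑ i, (w t i - η * (w t i * (g t (x t) i / G))) := by
              refine Finset.sum_congr rfl fun i _ => ?_; rw [hw' t ht' i]; ring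
        _ = (∑ i, w t i) - η * ∑ i, w t i * (g t (x t) i / G) := by
              rw [Finset.sum_sub_distrib, Finset.mul_sum]
        _ = (∑ i, w t i) - η * ((∑ k, w t k) * ∑ j, x t j * (g t (x t) j / G)) := by
              congr 2
              rw [Finset.mul_sum]
              refine Finset.sum_congr rfl fun i _ => ?_
              rw [hx t i]
              field_simp
        _ = (∑ i, w t i) * (1 - η * ∑ j, x t j * (g t (x t) j / G)) := by ring
      have h1 : (1 : ℝ) - η * ∑ j, x t j * (g t (x t) j / G)
          ≤ Real.exp (-(η * ∑ j, x t j * (g t (x t) j / G))) := Real.one_sub_le_exp_neg _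
      calc ∑ i, w (t+1) i = _ := hrec
      _ ≤ (∑ i, w t i) * Real.exp (-(η * ∑ j, x t j * (g t (x t) j / G))) :=
          mul_le_mul_of_nonneg_left h1 hS.le
      _ ≤ (n * Real.exp (-η * ∑ s ∈ Finset.range t, ∑ j, x s j * (g s (x s) j / G)))
            * Real.exp (-(η * ∑ j, x t j * (g t (x t) j / G))) :=
          mul_le_mul_of_nonneg_right (ih (by omega)) (Real.exp_pos _).le
      _ = n * Real.exp (-η * ∑ s ∈ Finset.range (t+1), ∑ j, x s j * (g s (x s) j / G)) := by
          rw [mul_assoc, ← Real.exp_add]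
          congr 2
          rw [Finset.sum_range_succ]
          ring
  -- lower bound on each weight
  have hLBexp : ∀ i : Fin n, ∀ t, t ≤ T →
      Real.exp (∑ s ∈ Finset.range t,
        (-(η * (g s (x s) i / G)) - (η * (g s (x s) i / G))^2)) ≤ w t i := by
    intro i t
    induction t with
    | zero => intro _; simp [hw0]
    | succ t ih =>
      intro ht
      have ht' : t < T := by omega
      have hu : |η * (g t (x t) i / G)| ≤ 1/2 := by
        rw [abs_mul, abs_of_nonneg hηnn]
        calc η * |g t (x t) i / G| ≤ η * 1 :=
              mul_le_mul_of_nonneg_left (hLb t ht' i) hηnn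
        _ ≤ 1/2 := by linarith
      obtain ⟨hu1, hu2⟩ := abs_le.mp hu
      have hkey := mw_key_exp (by linarith : -(1/2) ≤ η * (g t (x t) i / G)) hu2
      rw [Finset.sum_range_succ, Real.exp_add, hw' t ht' i]
      exact mul_le_mul (ih (by omega)) hkey (Real.exp_pos _).le (wpos t ht'.le i).le
  -- combine: per-coordinate regret bound
  have hmain : ∀ i : Fin n,
      (∑ s ∈ Finset.range T, ∑ j, x s j * (g s (x s) j / G))
        - ∑ s ∈ Finset.range T, g s (x s) i / G
      ≤ Real.log n / η + η * T := by
    intro i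
    have h1 := hLBexp i T le_rfl
    have h2 : w T i ≤ ∑ j, w T j :=
      Finset.single_le_sum (fun j _ => (wpos T le_rfl j).le) (Finset.mem_univ i)
    have h3 := hUB T le_rfl
    have hn0 : (0:ℝ) < n := by exact_mod_cast hnpos
    have h4 : Real.exp (∑ s ∈ Finset.range T,
        (-(η * (g s (x s) i / G)) - (η * (g s (x s) i / G))^2))
        ≤ Real.exp (Real.log n
            + -η * ∑ s ∈ Finset.range T, ∑ j, x s j * (g s (x s) j / G)) := by
      rw [Real.exp_add, Real.exp_log hn0]
      exact le_trans (le_trans h1 h2) h3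
    have h5 := Real.exp_le_exp.mp h4
    have h6 : ∑ s ∈ Finset.range T,
        (-(η * (g s (x s) i / G)) - (η * (g s (x s) i / G))^2)
        = -(η * ∑ s ∈ Finset.range T, g s (x s) i / G)
          - ∑ s ∈ Finset.range T, (η * (g s (x s) i / G))^2 := by
      rw [Finset.sum_sub_distrib, Finset.sum_neg_distrib, ← Finset.mul_sum]
    rw [h6] at h5
    have h7 : ∑ s ∈ Finset.range T, (η * (g s (x s) i / G))^2 ≤ η^2 * T := by
      calc ∑ s ∈ Finset.range T, (η * (g s (x s) i / G))^2
          ≤ ∑ s ∈ Finset.range T, η^2 := by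
            refine Finset.sum_le_sum fun s hs => ?_
            have hq := hLb s (Finset.mem_range.mp hs) i
            have hq2 : (g s (x s) i / G)^2 ≤ 1 := by
              nlinarith [abs_nonneg (g s (x s) i / G), sq_abs (g s (x s) i / G)]
            nlinarith [sq_nonneg η]
      _ = η^2 * T := by
            rw [Finset.sum_const, Finset.card_range, nsmul_eq_mul]; ring
    -- η * (C - A i) ≤ log n + η² T
    have h8 : η * ((∑ s ∈ Finset.range T, ∑ j, x s j * (g s (x s) j / G))
        - ∑ s ∈ Finset.range T, g s (x s) i / G) ≤ Real.log n + η^2 * T := by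
      have hexp : η * ((∑ s ∈ Finset.range T, ∑ j, x s j * (g s (x s) j / G))
          - ∑ s ∈ Finset.range T, g s (x s) i / G)
          = η * (∑ s ∈ Finset.range T, ∑ j, x s j * (g s (x s) j / G))
            - η * (∑ s ∈ Finset.range T, g s (x s) i / G) := by ring
      rw [hexp]
      linarith [h5, h7]
    rw [← le_div_iff₀' hηpos] at h8
    calc _ ≤ (Real.log n + η^2 * T) / η := h8
    _ = Real.log n / η + η * T := by field_simp
  -- gradient inequality per step
  have hfin : ∀ s, s < T →
      f s (x s) ≤ f s xstar + ∑ i, g s (x s) i * (x s i - xstar i) := by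
    intro s _
    have h := mw_grad_ineq (f s) (hfconv s) (x s) xstar (g s (x s)) (hgrad s (x s))
    have heq : ∑ i, g s (x s) i * (x s i - xstar i)
        = -∑ i, g s (x s) i * (xstar i - x s i) := by
      rw [← Finset.sum_neg_distrib]
      exact Finset.sum_congr rfl fun i _ => by ring
    rw [heq]
    linarith
  -- the total linearized regret
  have hD : ∑ t ∈ Finset.range T, ∑ i, g t (x t) i * (x t i - xstar i)
      ≤ η * T * G + G * Real.log n / η := by
    have hDeq : ∑ t ∈ Finset.range T, ∑ i, g t (x t) i * (x t i - xstar i)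
        = G * ∑ i, xstar i *
            ((∑ s ∈ Finset.range T, ∑ j, x s j * (g s (x s) j / G))
              - ∑ s ∈ Finset.range T, g s (x s) i / G) := by
      have l1 : ∑ t ∈ Finset.range T, ∑ i, g t (x t) i * (x t i - xstar i)
          = G * ∑ t ∈ Finset.range T,
              (∑ j, x t j * (g t (x t) j / G) - ∑ i, xstar i * (g t (x t) i / G)) := by
        rw [Finset.mul_sum]
        refine Finset.sum_congr rfl fun t _ => ?_
        rw [← Finset.sum_sub_distrib, Finset.mul_sum]
        refine Finset.sum_congr rfl fun i _ => ?_
        field_simp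
      have l2 : ∑ t ∈ Finset.range T, ∑ i, xstar i * (g t (x t) i / G)
          = ∑ i, xstar i * ∑ s ∈ Finset.range T, g s (x s) i / G := by
        rw [Finset.sum_comm]
        exact Finset.sum_congr rfl fun i _ => (Finset.mul_sum _ _ _).symm
      have l3 : ∑ i, xstar i * (∑ s ∈ Finset.range T, ∑ j, x s j * (g s (x s) j / G))
          = ∑ s ∈ Finset.range T, ∑ j, x s j * (g s (x s) j / G) := by
        rw [← Finset.sum_mul, hxssum, one_mul]
      rw [l1, Finset.sum_sub_distrib, l2]
      congr 1
      have hterm : ∀ i : Fin n, xstar i *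
          ((∑ s ∈ Finset.range T, ∑ j, x s j * (g s (x s) j / G))
            - ∑ s ∈ Finset.range T, g s (x s) i / G)
          = xstar i * (∑ s ∈ Finset.range T, ∑ j, x s j * (g s (x s) j / G))
            - xstar i * ∑ s ∈ Finset.range T, g s (x s) i / G := fun i => by ring
      rw [Finset.sum_congr rfl (fun i _ => hterm i), Finset.sum_sub_distrib, l3]
    rw [hDeq]
    have hb : ∑ i, xstar i *
        ((∑ s ∈ Finset.range T, ∑ j, x s j * (g s (x s) j / G))
          - ∑ s ∈ Finset.range T, g s (x s) i / G)
        ≤ ∑ i, xstar i * (Real.log n / η + η * T) := by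
      refine Finset.sum_le_sum fun i _ => ?_
      exact mul_le_mul_of_nonneg_left (hmain i) (hxsnn i)
    have hc : ∑ i, xstar i * (Real.log n / η + η * T) = Real.log n / η + η * T := by
      rw [← Finset.sum_mul, hxssum, one_mul]
    calc G * ∑ i, xstar i *
        ((∑ s ∈ Finset.range T, ∑ j, x s j * (g s (x s) j / G))
          - ∑ s ∈ Finset.range T, g s (x s) i / G)
        ≤ G * (Real.log n / η + η * T) := by
          rw [← hc]; exact mul_le_mul_of_nonneg_left hb hG.le
    _ = η * T * G + G * Real.log n / η := by ring
  calc ∑ t ∈ Finset.range T, f t (x t)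
      ≤ ∑ t ∈ Finset.range T, (f t xstar + ∑ i, g t (x t) i * (x t i - xstar i)) :=
        Finset.sum_le_sum fun s hs => hfin s (Finset.mem_range.mp hs)
  _ = (∑ t ∈ Finset.range T, f t xstar)
      + ∑ t ∈ Finset.range T, ∑ i, g t (x t) i * (x t i - xstar i) :=
        Finset.sum_add_distrib
  _ ≤ _ := by linarith
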